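/- Let T be a standard Young tableau with n ≥ 2 boxes. Then the position of the largest entry n in j(T) is equal to its position in T, or is one node to the left of it, or is one node below it; that is, pos_n(j(T)) ∈ { pos_n(T), pos_n(T) − (1,0), pos_n(T) − (0,1) }. -/
import Mathlib


/-!
Common framework.

A *cell* `(x, y)` has column `x` and row `y` (0-indexed, French convention, so the
bottom-left corner is `(0, 0)`).  A *filling* assigns to every cell a natural number,
where `0` encodes an empty cell.
-/

abbrev Cell : Type := ℕ × ℕ

abbrev Filling : Type := Cell → ℕ

/-- One sliding step of jeu de taquin: given a filling `F` and the position `h` of the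
hole, slide into the hole the smaller of the entries of the boxes directly to the right
of and directly above the hole (of those that exist); the hole moves to the vacated box.
If neither neighbouring box is occupied, nothing happens. -/
def slide (F : Filling) (h : Cell) : Filling × Cell :=
  let r := F (h.1 + 1, h.2)
  let u := F (h.1, h.2 + 1)
  if r = 0 ∧ u = 0 then (F, h)
  else if u = 0 ∨ (r ≠ 0 ∧ r < u) then
    (fun c => if c = h then r else if c = (h.1 + 1, h.2) then 0 else F c, (h.1 + 1, h.2))
  else
    (fun c => if c = h then u else if c = (h.1, h.2 + 1) then 0 else F c, (h.1, h.2 + 1))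

/-- Iterated sliding, with explicit fuel.  The process stops (and the result is stable
under adding more fuel) as soon as no box lies to the right of or above the hole. -/
def slideIter : ℕ → Filling → Cell → Filling × Cell
  | 0, F, h => (F, h)
  | fuel + 1, F, h =>
      if F (h.1 + 1, h.2) = 0 ∧ F (h.1, h.2 + 1) = 0 then (F, h)
      else slideIter fuel (slide F h).1 (slide F h).2

/-- Jeu de taquin with fuel `n` applied to `F`: erase the entry of the corner box
`(0,0)`, creating a hole there, then slide until no box lies to the right of or above
the hole.  Returns the resulting filling together with the final position of the hole.
For a standard Young tableau with at most `n` boxes, fuel `n` always suffices. -/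
def jdtAux (n : ℕ) (F : Filling) : Filling × Cell :=
  slideIter n (fun c => if c = ((0, 0) : Cell) then 0 else F c) (0, 0)

/-- The jeu de taquin transformation `j` (for tableaux with at most `n` boxes). -/
def jdt (n : ℕ) (F : Filling) : Filling := (jdtAux n F).1

/-- The final position of the hole in the jeu de taquin applied to `F`. -/
def holeEnd (n : ℕ) (F : Filling) : Cell := (jdtAux n F).2

/-- The position of the hole after `s` sliding steps of the jeu de taquin applied
to `F`; the sequence of these positions is the jeu de taquin path of `F`. -/
def holeAt (F : Filling) (s : ℕ) : Cell :=
  (slideIter s (fun c => if c = ((0, 0) : Cell) then 0 else F c) (0, 0)).2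

open Classical in
/-- The position `pos F k` of the entry `k` in the filling `F` (junk value if absent). -/
noncomputable def pos (F : Filling) (k : ℕ) : Cell :=
  if h : ∃ c : Cell, F c = k then h.choose else (0, 0)

/-- The content (`u`-coordinate) of the box of `F` containing the entry `k`:
the column minus the row. -/
noncomputable def content (F : Filling) (k : ℕ) : ℤ :=
  ((pos F k).1 : ℤ) - ((pos F k).2 : ℤ)

/-- `IsStdFilling F a n` : the filling `F` is a standard tableau with entries
`a+1, …, n`: every such entry occurs in exactly one box, there are no other entries,
the occupied boxes form a Young diagram (a lower set), and the entries strictly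
increase from left to right along rows and from bottom to top along columns. -/
def IsStdFilling (F : Filling) (a n : ℕ) : Prop :=
  (∀ k : ℕ, a < k → k ≤ n → ∃! c : Cell, F c = k) ∧
  (∀ c : Cell, F c ≤ n ∧ (F c = 0 ∨ a < F c)) ∧
  (∀ x y : ℕ, F (x + 1, y) ≠ 0 → F (x, y) ≠ 0) ∧
  (∀ x y : ℕ, F (x, y + 1) ≠ 0 → F (x, y) ≠ 0) ∧
  (∀ x y : ℕ, F (x + 1, y) ≠ 0 → F (x, y) < F (x + 1, y)) ∧
  (∀ x y : ℕ, F (x, y + 1) ≠ 0 → F (x, y) < F (x, y + 1))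

/-- The shape of a filling: the set of occupied cells. -/
def shape (F : Filling) : Set Cell := {c : Cell | F c ≠ 0}

/-- A finite set of cells is a Young diagram if it is a lower set. -/
def IsYoung (s : Finset Cell) : Prop :=
  ∀ x y : ℕ, ((x + 1, y) ∈ s → (x, y) ∈ s) ∧ ((x, y + 1) ∈ s → (x, y) ∈ s)

/-- The filling `F` has shape exactly `s`. -/
def HasShape (F : Filling) (s : Finset Cell) : Prop := ∀ c : Cell, c ∈ s ↔ F c ≠ 0

/-- `F ∈ 𝒯_s` : `F` is a standard Young tableau of shape `s`. -/
def IsSYTof (F : Filling) (s : Finset Cell) : Prop :=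
  IsStdFilling F 0 s.card ∧ HasShape F s

/-- The square Young diagram `□_N` of side `N`. -/
def squareDiagram (N : ℕ) : Finset Cell := Finset.range N ×ˢ Finset.range N

/-- `F ∈ 𝒯_{□_N}` : `F` is a standard Young tableau of square shape `□_N`. -/
def IsSquareSYT (N : ℕ) (F : Filling) : Prop := IsSYTof F (squareDiagram N)

/-- The modified jeu de taquin `J` on tableaux with `n` boxes: apply `j`, place a new box
with entry `n+1` at the final position of the hole, then decrease all entries by `1`. -/
def Jmod (n : ℕ) (F : Filling) : Filling :=
  fun c => (if c = holeEnd n F then n + 1 else jdt n F c) - 1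

/-- `IsPieri F n k` : the filling `F`, whose `k` largest entries are
`n-k+1, …, n`, is a Pieri tableau with respect to `k`: the contents of the boxes
containing the `k` largest entries are strictly increasing. -/
noncomputable def IsPieri (F : Filling) (n k : ℕ) : Prop :=
  ∀ p : ℕ, 1 ≤ p → p < k → content F (n - k + p) < content F (n - k + p + 1)

/-- The column into which the value `v` lands when row-inserted into row `y` of `P`
(searching columns `0, …, B`): the first column whose entry is empty or exceeds `v`. -/
def bumpCol (P : Filling) (v y B : ℕ) : ℕ :=
  (((List.range (B + 1)).find? fun x => decide (P (x, y) = 0 ∨ v < P (x, y))).getD B)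

/-- Row insertion: insert the value `v` into row `y` of `P`, bumping to higher rows;
returns the new filling and the cell where a new box was created. -/
def insertRow : ℕ → Filling → ℕ → ℕ → ℕ → Filling × Cell
  | 0, P, _, y, _ => (P, (0, y))
  | fuel + 1, P, v, y, B =>
      let x := bumpCol P v y B
      let w := P (x, y)
      let P' : Filling := fun c => if c = ((x, y) : Cell) then v else P c
      if w = 0 then (P', (x, y)) else insertRow fuel P' w (y + 1) B

/-- One step of the Robinson–Schensted algorithm: insert the value `vi.1` into the
insertion tableau and record the entry `vi.2` in the newly created box of the
recording tableau. -/
def rsStep (B : ℕ) (PQ : Filling × Filling) (vi : ℕ × ℕ) : Filling × Filling :=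
  let res := insertRow (B + 1) PQ.1 vi.1 0 B
  (res.1, fun c => if c = res.2 then vi.2 else PQ.2 c)

/-- The recording tableau `Q(w)` of the Robinson–Schensted row insertion of the
sequence `w`: the entry `i` marks the box created at step `i`. -/
def Qtab (w : List ℕ) : Filling :=
  ((w.zip (List.range' 1 w.length)).foldl (rsStep w.length) (fun _ => 0, fun _ => 0)).2

/-- The lazy parametrization `𝐪_i` of the jeu de taquin path of a tableau `F` with `n`
boxes: the last box along the jeu de taquin path of `F` whose entry in `F` is `≤ i`. -/
def lazyQ (n : ℕ) (F : Filling) (i : ℕ) : Cell :=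
  holeAt F (Nat.findGreatest (fun s => F (holeAt F s) ≤ i) n)

/-- The water configuration `W'(T)` in the single surfer scenario: apply `j` to
`T ∈ 𝒯_{□_N}` `m` times, renumber the entries to `1, …, w+1` (where `w = N²-m-1`)
preserving their order, and remove the box containing the largest entry `w+1`. -/
def waterSingle (N m : ℕ) (T : Filling) : Filling :=
  fun c =>
    if ((jdt (N ^ 2))^[m] T) c - m = N ^ 2 - m then 0
    else ((jdt (N ^ 2))^[m] T) c - m

/-- The water configuration `W̃'(M)` in the multisurfer scenario: apply `j` to
`M ∈ 𝒯̃_{□_N}` `m+1-k` times, renumber the entries to `1, …, w+k` (where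
`w = N²-m-1`) preserving their order, and remove the `k` boxes containing the
entries `w+1, …, w+k`. -/
def waterMulti (N m k : ℕ) (M : Filling) : Filling :=
  fun c =>
    if N ^ 2 - m - 1 < ((jdt (N ^ 2))^[m + 1 - k] M) c - (m + 1 - k) then 0
    else ((jdt (N ^ 2))^[m + 1 - k] M) c - (m + 1 - k)

/-- Invariant during the jeu de taquin slides: the hole is empty, the entry `n` occurs
in a unique cell, that cell is the original position `P` or one node left/below of it,
and in the latter case its coordinate sum is below the hole's. -/
def StmtInv (n : ℕ) (P : Cell) (F : Filling) (h : Cell) : Prop :=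
  F h = 0 ∧ ∃ c : Cell, (∀ c', F c' = n ↔ c' = c) ∧
    (c = P ∨ ((c = (P.1 - 1, P.2) ∨ c = (P.1, P.2 - 1)) ∧ c.1 + c.2 < h.1 + h.2))

lemma move_inv {n : ℕ} {P : Cell} (hn : 2 ≤ n) {F : Filling} {h s : Cell}
    (hs : s = (h.1 + 1, h.2) ∨ s = (h.1, h.2 + 1)) (hI : StmtInv n P F h) :
    StmtInv n P (fun c => if c = h then F s else if c = s then 0 else F c) s := by
  obtain ⟨hh, c, hc, hdisj⟩ := hI
  have hsh : s ≠ h := by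
    rcases hs with e | e <;> subst e <;>
      simp only [ne_eq, Prod.ext_iff] <;> omega
  have hsum : h.1 + h.2 + 1 = s.1 + s.2 := by
    rcases hs with e | e <;> subst e <;> simp <;> omega
  refine ⟨by simp [hsh], ?_⟩
  by_cases hr : F s = n
  · -- the entry n slides into the hole; it was at `c = P = s`
    have hc' : s = c := (hc s).mp hr
    have hcP : c = P := by
      rcases hdisj with h1 | ⟨_, hlt⟩
      · exact h1
      · exfalso; rw [← hc'] at hlt; omega
    refine ⟨h, fun c' => ⟨?_, ?_⟩, Or.inr ⟨?_, by omega⟩⟩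
    · intro hc''
      by_cases e1 : c' = h
      · exact e1
      by_cases e2 : c' = s
      · simp only [if_neg e1, if_pos e2] at hc''; omega
      · simp only [if_neg e1, if_neg e2] at hc''
        exact absurd (((hc c').mp hc'').trans hc'.symm) e2
    · intro e; subst e; simp only [if_pos rfl]; exact hr
    · rw [← hcP, ← hc']
      rcases hs with e | e
      · subst e; left; rfl
      · subst e; right; rfl
  · -- the entry n stays where it is
    have hcns : c ≠ s := fun e => hr (by rw [← e]; exact (hc c).mpr rfl)
    have hcnh : c ≠ h := fun e => by
      have := (hc c).mpr rfl; rw [e, hh] at this; omega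
    refine ⟨c, fun c' => ⟨?_, ?_⟩, ?_⟩
    · intro hc''
      by_cases e1 : c' = h
      · simp only [if_pos e1] at hc''; exact absurd hc'' hr
      by_cases e2 : c' = s
      · simp only [if_neg e1, if_pos e2] at hc''; omega
      · simp only [if_neg e1, if_neg e2] at hc''; exact (hc c').mp hc''
    · intro e; rw [e]; simp only [if_neg hcnh, if_neg hcns]; exact (hc c).mpr rfl
    · rcases hdisj with h1 | ⟨h2, hlt⟩
      · exact Or.inl h1
      · exact Or.inr ⟨h2, by omega⟩

lemma slide_inv {n : ℕ} {P : Cell} (hn : 2 ≤ n) {F : Filling} {h : Cell}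
    (hI : StmtInv n P F h) : StmtInv n P (slide F h).1 (slide F h).2 := by
  by_cases h0 : F (h.1 + 1, h.2) = 0 ∧ F (h.1, h.2 + 1) = 0
  · simp only [slide, if_pos h0]; exact hI
  by_cases hdir : F (h.1, h.2 + 1) = 0 ∨ (F (h.1 + 1, h.2) ≠ 0 ∧ F (h.1 + 1, h.2) < F (h.1, h.2 + 1))
  · simp only [slide, if_neg h0, if_pos hdir]
    exact move_inv hn (Or.inl rfl) hI
  · simp only [slide, if_neg h0, if_neg hdir]
    exact move_inv hn (Or.inr rfl) hI

lemma slideIter_inv {n : ℕ} {P : Cell} (hn : 2 ≤ n) :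
    ∀ (fuel : ℕ) (F : Filling) (h : Cell), StmtInv n P F h →
      StmtInv n P (slideIter fuel F h).1 (slideIter fuel F h).2 := by
  intro fuel
  induction fuel with
  | zero => intro F h hI; exact hI
  | succ fuel ih =>
    intro F h hI
    rw [slideIter]
    split
    · exact hI
    · exact ih _ _ (slide_inv hn hI)

lemma pos_eq_of_unique {F : Filling} {n : ℕ} {c : Cell}
    (hc : ∀ c', F c' = n ↔ c' = c) : pos F n = c := by
  have hex : ∃ c', F c' = n := ⟨c, (hc c).mpr rfl⟩
  rw [pos, dif_pos hex]
  exact (hc _).mp hex.choose_spec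

lemma corner_le {T : Filling} {n : ℕ} (hT : IsStdFilling T 0 n) :
    ∀ x y : ℕ, T (x, y) ≠ 0 → T (0, 0) ≤ T (x, y) := by
  obtain ⟨-, -, hrow0, hcol0, hrow, hcol⟩ := hT
  have hx : ∀ x : ℕ, T (x, 0) ≠ 0 → T (0, 0) ≤ T (x, 0) := by
    intro x
    induction x with
    | zero => intro _; exact le_refl _
    | succ x ih =>
      intro hne
      exact le_trans (ih (hrow0 x 0 hne)) (le_of_lt (hrow x 0 hne))
  intro x y
  induction y with
  | zero => exact hx x
  | succ y ih =>
    intro hne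
    exact le_trans (ih (hcol0 x y hne)) (le_of_lt (hcol x y hne))


/-- For a standard Young tableau `T` with `n ≥ 2` boxes, the position
of the largest entry `n` in `j(T)` equals its position in `T`, or is one node to the
left of it, or one node below it. -/
theorem stmt2 (n : ℕ) (hn : 2 ≤ n) (T : Filling) (hT : IsStdFilling T 0 n) :
    pos (jdt n T) n = pos T n ∨
    pos (jdt n T) n = ((pos T n).1 - 1, (pos T n).2) ∨
    pos (jdt n T) n = ((pos T n).1, (pos T n).2 - 1) := by
  obtain ⟨cn, hcn, hcnu⟩ := hT.1 n (by omega) le_rfl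
  obtain ⟨c1, hc1, -⟩ := hT.1 1 (by omega) (by omega)
  -- the corner does not contain n
  have hcorner : T (0, 0) ≠ n := by
    intro he
    have := corner_le hT c1.1 c1.2 (by rw [Prod.mk.eta, hc1]; omega)
    rw [Prod.mk.eta, hc1, he] at this; omega
  have hcn0 : cn ≠ ((0, 0) : Cell) := fun e => hcorner (by rw [← e]; exact hcn)
  have hTu : ∀ c' : Cell, T c' = n ↔ c' = cn := fun c' => ⟨fun h => hcnu c' h, fun h => h ▸ hcn⟩
  have hposT : pos T n = cn := pos_eq_of_unique hTu
  -- initial invariant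
  set F0 : Filling := fun c => if c = ((0, 0) : Cell) then 0 else T c with hF0
  have hF0v : ∀ c : Cell, c ≠ ((0, 0) : Cell) → F0 c = T c := fun c hc => if_neg hc
  have hF00 : F0 ((0, 0) : Cell) = 0 := if_pos rfl
  have hI0 : StmtInv n cn F0 (0, 0) := by
    refine ⟨hF00, cn, fun c' => ⟨?_, ?_⟩, Or.inl rfl⟩
    · intro hc'
      by_cases e : c' = ((0, 0) : Cell)
      · rw [e, hF00] at hc'; omega
      · rw [hF0v c' e] at hc'; exact (hTu c').mp hc'
    · intro e; rw [e, hF0v cn hcn0]; exact hcn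
  have hI := slideIter_inv (P := cn) hn n F0 (0, 0) hI0
  obtain ⟨-, c, hc, hdisj⟩ := hI
  have hpos : pos (jdt n T) n = c := pos_eq_of_unique hc
  rw [hpos, hposT]
  rcases hdisj with h1 | ⟨h2 | h2, -⟩
  · exact Or.inl h1
  · exact Or.inr (Or.inl h2)
  · exact Or.inr (Or.inr h2)
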